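/- Let Q = Σ_{i∈I} E_{i,σ(i)} be an n×n subpermutation matrix over a field F (I ⊆ [n], σ : I → [n] injective). Then a matrix A = [a_{ij}] belongs to the coset Q·U_n (U_n = unit upper triangular matrices) if and only if: (1) the set of indices of nonzero rows of A equals I, and (2) for each i ∈ I, the first nonzero entry of row i of A occurs in column σ(i) and equals 1. -/

import Mathlib

/-- description of the coset Q·U_n for a subpermutation
Q = Σ_{i∈I} E_{i,σ(i)}. -/
theorem mem_subpermutation_coset_iff {F : Type*} [Field F] {n : ℕ}
    (I : Finset (Fin n)) (σ : Fin n → Fin n) (hσ : Set.InjOn σ ↑I)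
    (Q : Matrix (Fin n) (Fin n) F)
    (hQ : ∀ i j : Fin n, Q i j = if i ∈ I ∧ j = σ i then 1 else 0)
    (A : Matrix (Fin n) (Fin n) F) :
    (∃ U : Matrix (Fin n) (Fin n) F,
        (∀ i j : Fin n, j < i → U i j = 0) ∧ (∀ i : Fin n, U i i = 1) ∧ A = Q * U) ↔
    ((∀ i : Fin n, (∃ j, A i j ≠ 0) ↔ i ∈ I) ∧
      ∀ i ∈ I, A i (σ i) = 1 ∧ ∀ j : Fin n, j < σ i → A i j = 0) := by
  classical
  have key : ∀ (U : Matrix (Fin n) (Fin n) F) (i j : Fin n),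
      (Q * U) i j = if i ∈ I then U (σ i) j else 0 := by
    intro U i j
    simp only [Matrix.mul_apply, hQ]
    by_cases hi : i ∈ I
    · simp only [hi, true_and, if_true]
      rw [Finset.sum_eq_single (σ i)]
      · simp
      · intro k _ hk
        simp [hk]
      · simp
    · simp [hi]
  constructor
  · rintro ⟨U, hlow, hdiag, rfl⟩
    constructor
    · intro i
      constructor
      · rintro ⟨j, hj⟩
        by_contra hi
        exact hj (by rw [key]; simp [hi])
      · intro hi
        refine ⟨σ i, ?_⟩
        rw [key]
        simp [hi, hdiag]
    · intro i hi
      constructor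
      · rw [key]; simp [hi, hdiag]
      · intro j hj
        rw [key]
        simp [hi, hlow _ _ hj]
  · rintro ⟨h1, h2⟩
    refine ⟨fun i j => if h : ∃ a, a ∈ I ∧ σ a = i then A h.choose j
        else if i = j then 1 else 0, ?_, ?_, ?_⟩
    · intro i j hji
      by_cases h : ∃ a, a ∈ I ∧ σ a = i
      · simp only [dif_pos h]
        obtain ⟨ha, hsa⟩ := h.choose_spec
        exact (h2 _ ha).2 j (by rw [hsa]; exact hji)
      · simp only [dif_neg h, if_neg (ne_of_gt hji)]
    · intro i
      by_cases h : ∃ a, a ∈ I ∧ σ a = i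
      · simp only [dif_pos h]
        obtain ⟨ha, hsa⟩ := h.choose_spec
        have := (h2 _ ha).1
        rwa [hsa] at this
      · simp [dif_neg h]
    · ext i j
      erw [key]
      by_cases hi : i ∈ I
      · have h : ∃ a, a ∈ I ∧ σ a = σ i := ⟨i, hi, rfl⟩
        simp only [hi, if_true, dif_pos h]
        obtain ⟨ha, hsa⟩ := h.choose_spec
        rw [hσ ha hi hsa]
      · simp only [hi, if_false]
        by_contra hz
        exact hi ((h1 i).1 ⟨j, hz⟩)
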